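/- Let E_1, E_2 be directed graphs with the same vertex set, E_1 having no loops, and let f be a functor between their free path categories that is the identity on vertices, satisfies f(α) ⪯ f(β) ⇒ α ⪯ β, and whose image is exactly the set of pointed paths of E_2 (plus trivial paths). If v is a vertex that emits at least one and at most finitely many edges in E_1, then E_2 has no loop based at v, and f maps every edge of E_1 with source v to an edge of E_2. -/

import Mathlib

/-- A directed graph: vertices, edges, source and range maps. -/
structure DirGraph where
  V : Type
  E : Type
  s : E → V
  r : E → V

namespace DirGraph

/-- `G.IsPath v es`: the list of edges `es` is a finite path starting at vertex `v`. -/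
def IsPath (G : DirGraph) : G.V → List G.E → Prop
  | _, [] => True
  | v, e :: es => G.s e = v ∧ G.IsPath (G.r e) es

/-- The range (endpoint) of a list of edges traversed starting at `v`. -/
def rng (G : DirGraph) (v : G.V) : List G.E → G.V
  | [] => v
  | e :: es => G.rng (G.r e) es

/-- A finite path in a graph: a source vertex together with a composable list of edges. -/
structure Path (G : DirGraph) where
  src : G.V
  edges : List G.E
  isPath : G.IsPath src edges

/-- The range of a finite path. -/
def Path.rng {G : DirGraph} (p : Path G) : G.V := G.rng p.src p.edges

/-- The trivial path at a vertex. -/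
def Path.trivialPath (G : DirGraph) (v : G.V) : Path G := ⟨v, [], trivial⟩

/-- The path consisting of a single edge. -/
def Path.single (G : DirGraph) (e : G.E) : Path G := ⟨G.s e, [e], ⟨rfl, trivial⟩⟩

theorem isPath_append {G : DirGraph} {v : G.V} {l₁ l₂ : List G.E}
    (h₁ : G.IsPath v l₁) (h₂ : G.IsPath (G.rng v l₁) l₂) : G.IsPath v (l₁ ++ l₂) := by
  induction l₁ generalizing v with
  | nil => exact h₂
  | cons e es ih => exact ⟨h₁.1, ih h₁.2 h₂⟩

/-- Concatenation of composable paths. -/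
def Path.comp {G : DirGraph} (p q : Path G) (h : q.src = p.rng) : Path G :=
  ⟨p.src, p.edges ++ q.edges, isPath_append p.isPath (by rw [show G.rng p.src p.edges = q.src from h.symm]; exact q.isPath)⟩

/-- The prolongation order: `Prolong β α` means `β ⪯ α`, i.e. `α = βγ` for some
path `γ` with `s(γ) = r(β)`. -/
def Prolong {G : DirGraph} (β α : Path G) : Prop :=
  α.src = β.src ∧ ∃ γ : List G.E, G.IsPath β.rng γ ∧ α.edges = β.edges ++ γ

/-- A path is pointed iff its final edge (if any) is not a loop.
(Trivial paths are regarded as pointed.) -/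
def Pointed {G : DirGraph} (p : Path G) : Prop :=
  ∀ e ∈ p.edges.getLast?, G.s e ≠ G.r e

/-- A functor between the free path categories of two directed graphs. -/
structure PathFunctor (G₁ G₂ : DirGraph) where
  obj : G₁.V → G₂.V
  map : Path G₁ → Path G₂
  map_src : ∀ p, (map p).src = obj p.src
  map_rng : ∀ p, (map p).rng = obj p.rng
  map_trivial : ∀ v, (map (Path.trivialPath G₁ v)).edges = ([] : List G₂.E)
  map_comp : ∀ (p q : Path G₁) (h : q.src = p.rng),
    map (p.comp q h) = (map p).comp (map q) (by rw [map_src, map_rng, h])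

end DirGraph

namespace DirGraph

theorem replicate_getLast? {α : Type} (a : α) (n : ℕ) (h : n ≠ 0) :
    (List.replicate n a).getLast? = some a := by
  induction n with
  | zero => exact absurd rfl h
  | succ n ih =>
    cases n with
    | zero => rfl
    | succ m =>
      rw [List.replicate_succ, List.replicate_succ, List.getLast?_cons_cons,
        ← List.replicate_succ]
      exact ih (by omega)

theorem Path.ext' {G : DirGraph} {p q : Path G} (h1 : p.src = q.src)
    (h2 : p.edges = q.edges) : p = q := by
  cases p; cases q; cases h1; cases h2; rfl

theorem rng_of_nil {G : DirGraph} {p : Path G} (h : p.edges = []) : p.rng = p.src := by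
  unfold Path.rng; rw [h]; rfl

theorem map_nil {G₁ G₂ : DirGraph} (f : PathFunctor G₁ G₂) (p : Path G₁)
    (h : p.edges = []) : (f.map p).edges = [] := by
  have : p = Path.trivialPath G₁ p.src := Path.ext' rfl h
  rw [this]; exact f.map_trivial _

theorem isPath_cons {G : DirGraph} {v : G.V} {e : G.E} {es : List G.E}
    (h : G.IsPath v (e :: es)) : G.s e = v ∧ G.IsPath (G.r e) es := h

theorem prolong_comp {G : DirGraph} (p q : Path G) (h : q.src = p.rng) :
    Prolong p (p.comp q h) :=
  ⟨rfl, q.edges, h ▸ q.isPath, rfl⟩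

theorem prolong_map {G₁ G₂ : DirGraph} (f : PathFunctor G₁ G₂) {α β : Path G₁}
    (h : Prolong α β) : Prolong (f.map α) (f.map β) := by
  obtain ⟨hs, γ, hγ, he⟩ := h
  have hβ : β = α.comp ⟨α.rng, γ, hγ⟩ rfl := Path.ext' hs he
  rw [hβ, f.map_comp]
  exact prolong_comp _ _ _

theorem rng_last {G : DirGraph} (l : List G.E) (h : l ≠ []) (v : G.V) :
    G.rng v l = G.r (l.getLast h) := by
  induction l generalizing v with
  | nil => exact absurd rfl h
  | cons e es ih =>
    cases es with
    | nil => rfl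
    | cons e' es' =>
      show G.rng (G.r e) (e' :: es') = _
      rw [List.getLast_cons (List.cons_ne_nil e' es')]
      exact ih (List.cons_ne_nil e' es') (G.r e)

end DirGraph

open DirGraph in
/-- Under the hypotheses of the main theorem, a regular vertex `v` of `E₁` supports no
loop in `E₂`, and `f` maps every edge emitted from `v` to an edge. -/
theorem regular_vertex_image_is_edge {V E₁ E₂ : Type}
    (s₁ r₁ : E₁ → V) (s₂ r₂ : E₂ → V)
    (f : PathFunctor (DirGraph.mk V E₁ s₁ r₁) (DirGraph.mk V E₂ s₂ r₂))
    (hobj : ∀ v : V, f.obj v = v)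
    (hnoloop : ∀ p : Path (DirGraph.mk V E₁ s₁ r₁), p.edges ≠ [] → p.src ≠ p.rng)
    (hrefl : ∀ α β : Path (DirGraph.mk V E₁ s₁ r₁),
      Prolong (f.map α) (f.map β) → Prolong α β)
    (himg₁ : ∀ p : Path (DirGraph.mk V E₁ s₁ r₁), Pointed (f.map p))
    (himg₂ : ∀ q : Path (DirGraph.mk V E₂ s₂ r₂), Pointed q → ∃ p, f.map p = q)
    (v : V) (hemit : ∃ e : E₁, s₁ e = v) (hfin : Set.Finite {e : E₁ | s₁ e = v}) :
    (¬ ∃ q : Path (DirGraph.mk V E₂ s₂ r₂), q.edges ≠ [] ∧ q.src = v ∧ q.rng = v) ∧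
    (∀ e : E₁, s₁ e = v → (f.map (Path.single _ e)).edges.length = 1) := by
  have hsrc : ∀ p : Path (DirGraph.mk V E₁ s₁ r₁), (f.map p).src = p.src := fun p => by rw [f.map_src, hobj]
  have hrng : ∀ p : Path (DirGraph.mk V E₁ s₁ r₁), (f.map p).rng = p.rng := fun p => by rw [f.map_rng, hobj]
  have hne : ∀ p : Path (DirGraph.mk V E₁ s₁ r₁), p.edges ≠ [] → (f.map p).edges ≠ [] := by
    intro p hp hcon
    have h1 : (f.map p).rng = (f.map p).src := rng_of_nil hcon
    rw [hsrc, hrng] at h1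
    exact hnoloop p hp h1.symm
  have hsne : ∀ b : E₁, (Path.single (DirGraph.mk V E₁ s₁ r₁) b).edges ≠ [] := by
    intro b; simp [Path.single]
  -- Fact A : there are no pointed loops anywhere in the codomain graph
  have factA : ∀ q : Path (DirGraph.mk V E₂ s₂ r₂), Pointed q → q.edges ≠ [] → q.src ≠ q.rng := by
    intro q hq hqe
    obtain ⟨p, hp⟩ := himg₂ q hq
    subst hp
    have hpne : p.edges ≠ [] := fun h => hqe (map_nil f p h)
    rw [hsrc, hrng]
    exact hnoloop p hpne
  -- Fact B : there is no loop edge of the codomain graph based at v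
  have factB : ∀ c : E₂, s₂ c = v → r₂ c ≠ v := by
    intro c hcs hcr
    obtain ⟨e, he⟩ := hemit
    have fene : (f.map (Path.single (DirGraph.mk V E₁ s₁ r₁) e)).edges ≠ [] := hne _ (hsne e)
    have fesrc : (f.map (Path.single (DirGraph.mk V E₁ s₁ r₁) e)).src = v := (hsrc _).trans he
    have hrep : ∀ n : ℕ, (DirGraph.mk V E₂ s₂ r₂).IsPath v (List.replicate n c) := by
      intro n; induction n with
      | zero => trivial
      | succ n ih =>
        exact ⟨hcs, by show (DirGraph.mk V E₂ s₂ r₂).IsPath (r₂ c) (List.replicate n c); rw [hcr]; exact ih⟩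
    have hreprng : ∀ n : ℕ, (DirGraph.mk V E₂ s₂ r₂).rng v (List.replicate n c) = v := by
      intro n; induction n with
      | zero => rfl
      | succ n ih =>
        show (DirGraph.mk V E₂ s₂ r₂).rng (r₂ c) (List.replicate n c) = v
        rw [hcr]; exact ih
    have qpath : ∀ n, (DirGraph.mk V E₂ s₂ r₂).IsPath v (List.replicate n c ++ (f.map (Path.single (DirGraph.mk V E₁ s₁ r₁) e)).edges) := by
      intro n
      refine isPath_append (hrep n) ?_
      rw [hreprng n, ← fesrc]
      exact (f.map (Path.single (DirGraph.mk V E₁ s₁ r₁) e)).isPath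
    set qn : ℕ → Path (DirGraph.mk V E₂ s₂ r₂) := fun n => ⟨v, List.replicate n c ++ (f.map (Path.single (DirGraph.mk V E₁ s₁ r₁) e)).edges, qpath n⟩ with hqn
    have qedges : ∀ n, (qn n).edges = List.replicate n c ++ (f.map (Path.single (DirGraph.mk V E₁ s₁ r₁) e)).edges := by
      intro n; rw [hqn]
    have qsrc : ∀ n, (qn n).src = v := by
      intro n; rw [hqn]
    have qpt : ∀ n, Pointed (qn n) := by
      intro n x hx
      have hgl : (qn n).edges.getLast? = (f.map (Path.single (DirGraph.mk V E₁ s₁ r₁) e)).edges.getLast? := by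
        rw [qedges n, List.getLast?_append, List.getLast?_eq_getLast fene]
        rfl
      rw [hgl] at hx
      exact himg₁ (Path.single (DirGraph.mk V E₁ s₁ r₁) e) x hx
    choose β hβ using fun n => himg₂ (qn n) (qpt n)
    have βne : ∀ n, (β n).edges ≠ [] := by
      intro n h
      have h2 := map_nil f (β n) h
      rw [hβ n, qedges n] at h2
      exact fene (List.append_eq_nil_iff.mp h2).2
    have βsrc : ∀ n, (β n).src = v := by
      intro n
      have h2 := hsrc (β n)
      rw [hβ n, qsrc n] at h2
      exact h2.symm
    set b : ℕ → E₁ := fun n => (β n).edges.head (βne n) with hb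
    have hbv : ∀ n, s₁ (b n) = v := by
      intro n
      have h1 := (β n).isPath
      rw [← List.cons_head_tail (l := (β n).edges) (βne n)] at h1
      exact (isPath_cons h1).1.trans (βsrc n)
    have hpro : ∀ n, Prolong (Path.single (DirGraph.mk V E₁ s₁ r₁) (b n)) (β n) := by
      intro n
      have h1 := (β n).isPath
      rw [← List.cons_head_tail (l := (β n).edges) (βne n)] at h1
      exact ⟨(βsrc n).trans (hbv n).symm, (β n).edges.tail, (isPath_cons h1).2,
        (List.cons_head_tail (l := (β n).edges) (βne n)).symm⟩
    have hlen : ∀ n, n < (f.map (Path.single (DirGraph.mk V E₁ s₁ r₁) (b n))).edges.length := by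
      intro n
      by_contra hle
      push_neg at hle
      have lne : (f.map (Path.single (DirGraph.mk V E₁ s₁ r₁) (b n))).edges ≠ [] := hne _ (hsne (b n))
      obtain ⟨_, γ, _, hγe⟩ := prolong_map f (hpro n)
      rw [hβ n, qedges n] at hγe
      have hpre : (f.map (Path.single (DirGraph.mk V E₁ s₁ r₁) (b n))).edges <+: List.replicate n c ++ (f.map (Path.single (DirGraph.mk V E₁ s₁ r₁) e)).edges := ⟨γ, hγe.symm⟩
      have heq : (f.map (Path.single (DirGraph.mk V E₁ s₁ r₁) (b n))).edges = List.replicate (f.map (Path.single (DirGraph.mk V E₁ s₁ r₁) (b n))).edges.length c := by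
        have h1 := List.prefix_iff_eq_take.mp hpre
        rw [List.take_append_of_le_length (by rw [List.length_replicate]; exact hle),
          List.take_replicate] at h1
        have h3 : (f.map (Path.single (DirGraph.mk V E₁ s₁ r₁) (b n))).edges.length ⊓ n = (f.map (Path.single (DirGraph.mk V E₁ s₁ r₁) (b n))).edges.length := by omega
        rw [h3] at h1
        exact h1
      have hk : (f.map (Path.single (DirGraph.mk V E₁ s₁ r₁) (b n))).edges.length ≠ 0 := fun h0 => lne (List.length_eq_zero_iff.mp h0)
      have hpt := himg₁ (Path.single (DirGraph.mk V E₁ s₁ r₁) (b n)) c (by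
        show (f.map (Path.single (DirGraph.mk V E₁ s₁ r₁) (b n))).edges.getLast? = some c
        rw [heq]
        exact replicate_getLast? c _ hk)
      exact hpt (hcs.trans hcr.symm)
    -- finiteness contradiction
    have hle : (f.map (Path.single (DirGraph.mk V E₁ s₁ r₁)
        (b (hfin.toFinset.sup fun x => (f.map (Path.single (DirGraph.mk V E₁ s₁ r₁) x)).edges.length)))).edges.length ≤
        hfin.toFinset.sup fun x => (f.map (Path.single (DirGraph.mk V E₁ s₁ r₁) x)).edges.length :=
      Finset.le_sup (f := fun x => (f.map (Path.single (DirGraph.mk V E₁ s₁ r₁) x)).edges.length)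
        (hfin.mem_toFinset.mpr (hbv _))
    exact absurd (hlen _) (not_lt.mpr hle)
  constructor
  · -- part 1 : no loop at v
    rintro ⟨q, hq, hqs, hqr⟩
    by_cases hl : s₂ (q.edges.getLast hq) = r₂ (q.edges.getLast hq)
    · have hr : q.rng = r₂ (q.edges.getLast hq) := rng_last q.edges hq q.src
      rw [hr] at hqr
      exact factB _ (hl.trans hqr) hqr
    · have hpt : Pointed q := by
        intro x hx
        rw [List.getLast?_eq_getLast hq, Option.mem_some_iff] at hx
        subst hx
        exact hl
      exact factA q hpt hq (hqs.trans hqr.symm)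
  · -- part 2 : edges go to edges
    intro e he
    have fene : (f.map (Path.single (DirGraph.mk V E₁ s₁ r₁) e)).edges ≠ [] := hne _ (hsne e)
    have fesrc : (f.map (Path.single (DirGraph.mk V E₁ s₁ r₁) e)).src = v := (hsrc _).trans he
    obtain ⟨d, rest, hdr⟩ := List.exists_cons_of_ne_nil fene
    have hfeP := (f.map (Path.single (DirGraph.mk V E₁ s₁ r₁) e)).isPath
    rw [hdr] at hfeP
    have hd1 : s₂ d = v := (isPath_cons hfeP).1.trans fesrc
    have hrest : rest = [] := by
      by_contra hrest
      have hdpt : Pointed (Path.single (DirGraph.mk V E₂ s₂ r₂) d) := by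
        intro x hx
        simp [Path.single] at hx
        subst hx
        intro hh
        have hh' : s₂ d = r₂ d := hh
        exact factB d hd1 (hh' ▸ hd1)
      obtain ⟨p, hp⟩ := himg₂ _ hdpt
      have hpro : Prolong (f.map p) (f.map (Path.single (DirGraph.mk V E₁ s₁ r₁) e)) := by
        rw [hp]
        refine ⟨?_, rest, (isPath_cons hfeP).2, hdr⟩
        show (f.map (Path.single (DirGraph.mk V E₁ s₁ r₁) e)).src = s₂ d
        rw [hd1]; exact fesrc
      obtain ⟨hps, γ, _, hγ⟩ := hrefl _ _ hpro
      have hpne : p.edges ≠ [] := by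
        intro h
        have h2 := map_nil f p h
        rw [hp] at h2
        simp [Path.single] at h2
      obtain ⟨b0, t, hbt⟩ := List.exists_cons_of_ne_nil hpne
      rw [hbt] at hγ
      have hγ2 : [e] = b0 :: (t ++ γ) := by simpa [Path.single] using hγ
      injection hγ2 with h1 h2
      have ht : t = [] := (List.append_eq_nil_iff.mp h2.symm).1
      have hpedges : p.edges = [e] := by rw [hbt, ht, ← h1]
      have hpe : p = Path.single (DirGraph.mk V E₁ s₁ r₁) e := Path.ext' hps.symm hpedges
      rw [hpe] at hp
      have hd2 : (f.map (Path.single (DirGraph.mk V E₁ s₁ r₁) e)).edges = [d] := by rw [hp]; rfl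
      rw [hdr] at hd2
      simp at hd2
      exact hrest hd2
    rw [hdr, hrest]
    rfl
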